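/- For the q = 2 model, if J₁ < 0 and J₁ < J₀, then the per capita investment l(β,J₀,J₁) given by the explicit formula tends to 1 as β → ∞; if J₀ < 0 and J₀ < J₁, then l(β,J₀,J₁) tends to 0 as β → ∞; and if both J₀ > 0 and J₁ > 0, then l(β,J₀,J₁) tends to 1/2 as β → ∞. -/

import Mathlib

open Real

/-- The discriminant `Δ(β, J₀, J₁)` of the `q = 2` model. -/
noncomputable def q2Delta (β J₀ J₁ : ℝ) : ℝ :=
  4 * exp (2 * β * J₁) - 2 * exp (β * (J₁ - J₀)) + exp (2 * β * (J₁ - J₀)) + 1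

/-- The closed-form per capita investment of the `q = 2` model in the
thermodynamic limit. -/
noncomputable def q2Investment (β J₀ J₁ : ℝ) : ℝ :=
  (-exp (β * (J₁ - J₀)) + 2 * exp (2 * β * J₁) + 1 + Real.sqrt (q2Delta β J₀ J₁)) /
  (4 * exp (2 * β * J₁) - 2 * exp (β * (J₁ - J₀)) + exp (2 * β * (J₁ - J₀))
    + exp (β * (J₁ - J₀)) * Real.sqrt (q2Delta β J₀ J₁) + Real.sqrt (q2Delta β J₀ J₁) + 1)


open Filter

private lemma expz (c : ℝ) (hc : c < 0) :
    Tendsto (fun β : ℝ => exp (β * c)) atTop (nhds 0) :=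
  Real.tendsto_exp_atBot.comp (tendsto_id.atTop_mul_const_of_neg hc)

private lemma expz' (c : ℝ) (hc : c < 0) :
    Tendsto (fun β : ℝ => exp (2 * β * c)) atTop (nhds 0) :=
  (expz (2 * c) (by linarith)).congr (fun β => by rw [show β * (2 * c) = 2 * β * c by ring])

private lemma delta_tendsto_one (J₀ J₁ : ℝ) (h1 : J₁ < 0) (h2 : J₁ < J₀) :
    Tendsto (fun β => q2Delta β J₀ J₁) atTop (nhds 1) := by
  have hx := expz (J₁ - J₀) (by linarith)
  have hy := expz' J₁ h1
  have hx2 := expz' (J₁ - J₀) (by linarith)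
  have h := (((hy.const_mul 4).sub (hx.const_mul 2)).add hx2).add
    (tendsto_const_nhds (x := (1:ℝ)))
  simpa [q2Delta] using h

private lemma sqrt_delta_tendsto_one (J₀ J₁ : ℝ) (h1 : J₁ < 0) (h2 : J₁ < J₀) :
    Tendsto (fun β => Real.sqrt (q2Delta β J₀ J₁)) atTop (nhds 1) := by
  have := (Real.continuous_sqrt.tendsto 1).comp (delta_tendsto_one J₀ J₁ h1 h2)
  simpa [Function.comp_def] using this

/-- Limits of the `q = 2` per capita investment as `β → ∞`:
it tends to `1` if `J₁ < 0` and `J₁ < J₀`, to `0` if `J₀ < 0` and `J₀ < J₁`,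
and to `1/2` if both `J₀ > 0` and `J₁ > 0`. -/
theorem q2_investment_beta_limits (J₀ J₁ : ℝ) :
    (J₁ < 0 → J₁ < J₀ →
      Tendsto (fun β => q2Investment β J₀ J₁) atTop (nhds 1)) ∧
    (J₀ < 0 → J₀ < J₁ →
      Tendsto (fun β => q2Investment β J₀ J₁) atTop (nhds 0)) ∧
    (0 < J₀ → 0 < J₁ →
      Tendsto (fun β => q2Investment β J₀ J₁) atTop (nhds (1 / 2))) := by
  refine ⟨?_, ?_, ?_⟩
  · -- Case 1 : J₁ < 0, J₁ < J₀
    intro h1 h2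
    have hx := expz (J₁ - J₀) (by linarith)
    have hy := expz' J₁ h1
    have hx2 := expz' (J₁ - J₀) (by linarith)
    have hs := sqrt_delta_tendsto_one J₀ J₁ h1 h2
    have hnum : Tendsto (fun β =>
        -exp (β * (J₁ - J₀)) + 2 * exp (2 * β * J₁) + 1 + Real.sqrt (q2Delta β J₀ J₁))
        atTop (nhds 2) := by
      have := ((hx.neg.add (hy.const_mul 2)).add (tendsto_const_nhds (x := (1:ℝ)))).add hs
      convert this using 2
      norm_num
    have hden : Tendsto (fun β =>
        4 * exp (2 * β * J₁) - 2 * exp (β * (J₁ - J₀)) + exp (2 * β * (J₁ - J₀))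
          + exp (β * (J₁ - J₀)) * Real.sqrt (q2Delta β J₀ J₁) + Real.sqrt (q2Delta β J₀ J₁) + 1)
        atTop (nhds 2) := by
      have := (((((hy.const_mul 4).sub (hx.const_mul 2)).add hx2).add (hx.mul hs)).add hs).add
        (tendsto_const_nhds (x := (1:ℝ)))
      convert this using 2
      norm_num
    have := hnum.div hden (by norm_num)
    rw [div_self two_ne_zero] at this
    exact this
  · -- Case 2 : J₀ < 0, J₀ < J₁
    intro h1 h2
    have key : ∀ β : ℝ, q2Investment β J₀ J₁ =
        (-exp (β * (J₀ - J₁)) + 2 * exp (2 * β * J₀) + exp (2 * β * (J₀ - J₁))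
          + Real.sqrt (q2Delta β J₁ J₀) * exp (β * (J₀ - J₁))) /
        (4 * exp (2 * β * J₀) - 2 * exp (β * (J₀ - J₁)) + 1 + Real.sqrt (q2Delta β J₁ J₀)
          + Real.sqrt (q2Delta β J₁ J₀) * exp (β * (J₀ - J₁)) + exp (2 * β * (J₀ - J₁))) := by
      intro β
      have ha := Real.exp_ne_zero (β * J₀)
      have hb := Real.exp_ne_zero (β * J₁)
      have hΔ : q2Delta β J₀ J₁ = (exp (β * (J₁ - J₀))) ^ 2 * q2Delta β J₁ J₀ := by
        simp only [q2Delta,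
          show 2 * β * J₁ = β * J₁ + β * J₁ by ring,
          show β * (J₁ - J₀) = β * J₁ - β * J₀ by ring,
          show 2 * β * (J₁ - J₀) = (β * J₁ + β * J₁) - (β * J₀ + β * J₀) by ring,
          show 2 * β * J₀ = β * J₀ + β * J₀ by ring,
          show β * (J₀ - J₁) = β * J₀ - β * J₁ by ring,
          show 2 * β * (J₀ - J₁) = (β * J₀ + β * J₀) - (β * J₁ + β * J₁) by ring,
          Real.exp_add, Real.exp_sub]
        field_simp
        ring
      have hs : Real.sqrt (q2Delta β J₀ J₁)
          = exp (β * (J₁ - J₀)) * Real.sqrt (q2Delta β J₁ J₀) := by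
        rw [hΔ, Real.sqrt_mul (sq_nonneg _), Real.sqrt_sq (le_of_lt (Real.exp_pos _))]
      rw [q2Investment, hs]
      rw [show (-exp (β * (J₁ - J₀)) + 2 * exp (2 * β * J₁) + 1
            + exp (β * (J₁ - J₀)) * Real.sqrt (q2Delta β J₁ J₀))
          = (exp (β * (J₁ - J₀))) ^ 2 *
            (-exp (β * (J₀ - J₁)) + 2 * exp (2 * β * J₀) + exp (2 * β * (J₀ - J₁))
              + Real.sqrt (q2Delta β J₁ J₀) * exp (β * (J₀ - J₁))) by
        simp only [
          show 2 * β * J₁ = β * J₁ + β * J₁ by ring,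
          show β * (J₁ - J₀) = β * J₁ - β * J₀ by ring,
          show 2 * β * (J₀ - J₁) = (β * J₀ + β * J₀) - (β * J₁ + β * J₁) by ring,
          show 2 * β * J₀ = β * J₀ + β * J₀ by ring,
          show β * (J₀ - J₁) = β * J₀ - β * J₁ by ring,
          Real.exp_add, Real.exp_sub]
        field_simp]
      rw [show (4 * exp (2 * β * J₁) - 2 * exp (β * (J₁ - J₀)) + exp (2 * β * (J₁ - J₀))
            + exp (β * (J₁ - J₀)) * (exp (β * (J₁ - J₀)) * Real.sqrt (q2Delta β J₁ J₀))
            + exp (β * (J₁ - J₀)) * Real.sqrt (q2Delta β J₁ J₀) + 1)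
          = (exp (β * (J₁ - J₀))) ^ 2 *
            (4 * exp (2 * β * J₀) - 2 * exp (β * (J₀ - J₁)) + 1 + Real.sqrt (q2Delta β J₁ J₀)
              + Real.sqrt (q2Delta β J₁ J₀) * exp (β * (J₀ - J₁)) + exp (2 * β * (J₀ - J₁))) by
        simp only [
          show 2 * β * J₁ = β * J₁ + β * J₁ by ring,
          show β * (J₁ - J₀) = β * J₁ - β * J₀ by ring,
          show 2 * β * (J₁ - J₀) = (β * J₁ + β * J₁) - (β * J₀ + β * J₀) by ring,
          show 2 * β * (J₀ - J₁) = (β * J₀ + β * J₀) - (β * J₁ + β * J₁) by ring,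
          show 2 * β * J₀ = β * J₀ + β * J₀ by ring,
          show β * (J₀ - J₁) = β * J₀ - β * J₁ by ring,
          Real.exp_add, Real.exp_sub]
        field_simp]
      exact mul_div_mul_left _ _ (pow_ne_zero 2 (Real.exp_ne_zero _))
    have hx := expz (J₀ - J₁) (by linarith)
    have hy := expz' J₀ h1
    have hx2 := expz' (J₀ - J₁) (by linarith)
    have hs := sqrt_delta_tendsto_one J₁ J₀ h1 h2
    have hnum : Tendsto (fun β =>
        -exp (β * (J₀ - J₁)) + 2 * exp (2 * β * J₀) + exp (2 * β * (J₀ - J₁))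
          + Real.sqrt (q2Delta β J₁ J₀) * exp (β * (J₀ - J₁))) atTop (nhds 0) := by
      have := ((hx.neg.add (hy.const_mul 2)).add hx2).add (hs.mul hx)
      convert this using 2
      norm_num
    have hden : Tendsto (fun β =>
        4 * exp (2 * β * J₀) - 2 * exp (β * (J₀ - J₁)) + 1 + Real.sqrt (q2Delta β J₁ J₀)
          + Real.sqrt (q2Delta β J₁ J₀) * exp (β * (J₀ - J₁)) + exp (2 * β * (J₀ - J₁)))
        atTop (nhds 2) := by
      have := (((((hy.const_mul 4).sub (hx.const_mul 2)).add
        (tendsto_const_nhds (x := (1:ℝ)))).add hs).add (hs.mul hx)).add hx2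
      convert this using 2
      norm_num
    have := hnum.div hden (by norm_num)
    rw [zero_div] at this
    exact Tendsto.congr (fun β => (key β).symm) this
  · -- Case 3 : 0 < J₀, 0 < J₁
    intro h1 h2
    set D3 : ℝ → ℝ := fun β =>
      4 - 2 * exp (β * (-(J₀ + J₁))) + exp (β * (-(2 * J₀))) + exp (β * (-(2 * J₁))) with hD3
    have key : ∀ β : ℝ, q2Investment β J₀ J₁ =
        (-exp (β * (-(J₀ + J₁))) + 2 + exp (β * (-(2 * J₁)))
          + Real.sqrt (D3 β) * exp (β * (-J₁))) /
        (4 - 2 * exp (β * (-(J₀ + J₁))) + exp (β * (-(2 * J₀)))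
          + Real.sqrt (D3 β) * exp (β * (-J₀)) + Real.sqrt (D3 β) * exp (β * (-J₁))
          + exp (β * (-(2 * J₁)))) := by
      intro β
      have ha := Real.exp_ne_zero (β * J₀)
      have hb := Real.exp_ne_zero (β * J₁)
      have hΔ : q2Delta β J₀ J₁ = (exp (β * J₁)) ^ 2 * D3 β := by
        simp only [q2Delta, hD3,
          show 2 * β * J₁ = β * J₁ + β * J₁ by ring,
          show β * (J₁ - J₀) = β * J₁ - β * J₀ by ring,
          show 2 * β * (J₁ - J₀) = (β * J₁ + β * J₁) - (β * J₀ + β * J₀) by ring,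
          show β * (-(J₀ + J₁)) = -(β * J₀ + β * J₁) by ring,
          show β * (-(2 * J₀)) = -(β * J₀ + β * J₀) by ring,
          show β * (-(2 * J₁)) = -(β * J₁ + β * J₁) by ring,
          Real.exp_add, Real.exp_sub, Real.exp_neg]
        field_simp
      have hs : Real.sqrt (q2Delta β J₀ J₁) = exp (β * J₁) * Real.sqrt (D3 β) := by
        rw [hΔ, Real.sqrt_mul (sq_nonneg _), Real.sqrt_sq (le_of_lt (Real.exp_pos _))]
      rw [q2Investment, hs]
      rw [show (-exp (β * (J₁ - J₀)) + 2 * exp (2 * β * J₁) + 1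
            + exp (β * J₁) * Real.sqrt (D3 β))
          = (exp (β * J₁)) ^ 2 *
            (-exp (β * (-(J₀ + J₁))) + 2 + exp (β * (-(2 * J₁)))
              + Real.sqrt (D3 β) * exp (β * (-J₁))) by
        simp only [
          show 2 * β * J₁ = β * J₁ + β * J₁ by ring,
          show β * (J₁ - J₀) = β * J₁ - β * J₀ by ring,
          show β * (-(J₀ + J₁)) = -(β * J₀ + β * J₁) by ring,
          show β * (-(2 * J₁)) = -(β * J₁ + β * J₁) by ring,
          show β * (-J₁) = -(β * J₁) by ring,
          Real.exp_add, Real.exp_sub, Real.exp_neg]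
        field_simp]
      rw [show (4 * exp (2 * β * J₁) - 2 * exp (β * (J₁ - J₀)) + exp (2 * β * (J₁ - J₀))
            + exp (β * (J₁ - J₀)) * (exp (β * J₁) * Real.sqrt (D3 β))
            + exp (β * J₁) * Real.sqrt (D3 β) + 1)
          = (exp (β * J₁)) ^ 2 *
            (4 - 2 * exp (β * (-(J₀ + J₁))) + exp (β * (-(2 * J₀)))
              + Real.sqrt (D3 β) * exp (β * (-J₀)) + Real.sqrt (D3 β) * exp (β * (-J₁))
              + exp (β * (-(2 * J₁)))) by
        simp only [
          show 2 * β * J₁ = β * J₁ + β * J₁ by ring,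
          show β * (J₁ - J₀) = β * J₁ - β * J₀ by ring,
          show 2 * β * (J₁ - J₀) = (β * J₁ + β * J₁) - (β * J₀ + β * J₀) by ring,
          show β * (-(J₀ + J₁)) = -(β * J₀ + β * J₁) by ring,
          show β * (-(2 * J₀)) = -(β * J₀ + β * J₀) by ring,
          show β * (-(2 * J₁)) = -(β * J₁ + β * J₁) by ring,
          show β * (-J₀) = -(β * J₀) by ring,
          show β * (-J₁) = -(β * J₁) by ring,
          Real.exp_add, Real.exp_sub, Real.exp_neg]
        field_simp]
      exact mul_div_mul_left _ _ (pow_ne_zero 2 (Real.exp_ne_zero _))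
    have hxy := expz (-(J₀ + J₁)) (by linarith)
    have hx0 := expz (-(2 * J₀)) (by linarith)
    have hx1 := expz (-(2 * J₁)) (by linarith)
    have hJ0 := expz (-J₀) (by linarith)
    have hJ1 := expz (-J₁) (by linarith)
    have hD : Tendsto D3 atTop (nhds 4) := by
      have := (((tendsto_const_nhds (x := (4:ℝ))).sub (hxy.const_mul 2)).add hx0).add hx1
      simpa [hD3] using this
    have hsq : Tendsto (fun β => Real.sqrt (D3 β)) atTop (nhds 2) := by
      have := (Real.continuous_sqrt.tendsto 4).comp hD
      have h4 : Real.sqrt 4 = 2 := by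
        rw [show (4:ℝ) = 2 ^ 2 by norm_num, Real.sqrt_sq (by norm_num)]
      simpa [h4, Function.comp_def] using this
    have hnum : Tendsto (fun β =>
        -exp (β * (-(J₀ + J₁))) + 2 + exp (β * (-(2 * J₁)))
          + Real.sqrt (D3 β) * exp (β * (-J₁))) atTop (nhds 2) := by
      have := ((hxy.neg.add (tendsto_const_nhds (x := (2:ℝ)))).add hx1).add (hsq.mul hJ1)
      convert this using 2
      norm_num
    have hden : Tendsto (fun β =>
        4 - 2 * exp (β * (-(J₀ + J₁))) + exp (β * (-(2 * J₀)))
          + Real.sqrt (D3 β) * exp (β * (-J₀)) + Real.sqrt (D3 β) * exp (β * (-J₁))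
          + exp (β * (-(2 * J₁)))) atTop (nhds 4) := by
      have := (((((tendsto_const_nhds (x := (4:ℝ))).sub (hxy.const_mul 2)).add hx0).add
        (hsq.mul hJ0)).add (hsq.mul hJ1)).add hx1
      convert this using 2
      norm_num
    have := hnum.div hden (by norm_num)
    rw [show (2:ℝ) / 4 = 1 / 2 by norm_num] at this
    exact Tendsto.congr (fun β => (key β).symm) this
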